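/- Let ψ be a rank-one projector, ρ a density matrix, and suppose Λ₊, Λ₋ are quantum channels and λ₊, λ₋ ≥ 0 with λ₊ − λ₋ = 1 satisfy tr[ψ·(λ₊Λ₊(ρ) − λ₋Λ₋(ρ))] ≥ 1 − ε. If moreover tr[ψ Λ₊(ρ)] ≤ f and tr[ψ Λ₋(ρ)] ≥ 0 for some f ∈ (0,1], then λ₊ + λ₋ ≥ max{ 2(1−ε)/f − 1, 1 }. -/

import Mathlib

open Matrix BigOperators ComplexOrder

noncomputable section

/-- Trace norm: tr √(AᴴA). -/
noncomputable def traceNorm {n : Type*} [Fintype n] [DecidableEq n] (A : Matrix n n ℂ) : ℝ :=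
  (((Matrix.posSemidef_conjTranspose_mul_self A).1.eigenvectorUnitary : Matrix n n ℂ) *
    Matrix.diagonal (((↑) : ℝ → ℂ) ∘ (Real.sqrt ·) ∘ (Matrix.posSemidef_conjTranspose_mul_self A).1.eigenvalues) *
    (star ((Matrix.posSemidef_conjTranspose_mul_self A).1.eigenvectorUnitary : Matrix n n ℂ))).trace.re

/-- Density operator: positive semidefinite with unit trace. -/
def IsDensity {n : Type*} [Fintype n] [DecidableEq n] (ρ : Matrix n n ℂ) : Prop :=
  ρ.PosSemidef ∧ ρ.trace = 1

/-- Choi matrix of a linear map on matrices. -/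
noncomputable def choi {n m : Type*} [Fintype n] [DecidableEq n] [Fintype m] [DecidableEq m]
    (Φ : Matrix n n ℂ →ₗ[ℂ] Matrix m m ℂ) : Matrix (n × m) (n × m) ℂ :=
  ∑ i : n, ∑ j : n,
    Matrix.kroneckerMap (· * ·) (Matrix.single i j (1 : ℂ)) (Φ (Matrix.single i j (1 : ℂ)))

/-- Quantum channel: completely positive (PSD Choi matrix) and trace preserving. -/
def IsCPTP {n m : Type*} [Fintype n] [DecidableEq n] [Fintype m] [DecidableEq m]
    (Φ : Matrix n n ℂ →ₗ[ℂ] Matrix m m ℂ) : Prop :=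
  (choi Φ).PosSemidef ∧ ∀ A, (Φ A).trace = A.trace
theorem virtual_overhead_lower_bound
    {n m : Type*} [Fintype n] [DecidableEq n] [Fintype m] [DecidableEq m]
    (v : m → ℂ) (hv : star v ⬝ᵥ v = 1)
    (ψ : Matrix m m ℂ) (hψ : ψ = Matrix.vecMulVec v (star v))
    (ρ : Matrix n n ℂ) (hρ : IsDensity ρ)
    (Λp Λm : Matrix n n ℂ →ₗ[ℂ] Matrix m m ℂ) (hΛp : IsCPTP Λp) (hΛm : IsCPTP Λm)
    (lp lm : ℝ) (hlp : 0 ≤ lp) (hlm : 0 ≤ lm) (hl : lp - lm = 1)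
    (ε f : ℝ) (hε : 0 ≤ ε) (hε1 : ε < 1) (hf0 : 0 < f) (hf1 : f ≤ 1)
    (hfid : 1 - ε ≤ ((ψ * ((lp : ℂ) • Λp ρ - (lm : ℂ) • Λm ρ)).trace).re)
    (hup : ((ψ * Λp ρ).trace).re ≤ f)
    (hlo : 0 ≤ ((ψ * Λm ρ).trace).re) :
    max (2 * (1 - ε) / f - 1) 1 ≤ lp + lm := by
  have expand : ((ψ * ((lp : ℂ) • Λp ρ - (lm : ℂ) • Λm ρ)).trace).re
      = lp * ((ψ * Λp ρ).trace).re - lm * ((ψ * Λm ρ).trace).re := by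
    rw [Matrix.mul_sub, Matrix.mul_smul, Matrix.mul_smul, Matrix.trace_sub,
      Matrix.trace_smul, Matrix.trace_smul]
    simp [Complex.smul_re]
  have hlp' : lp * ((ψ * Λp ρ).trace).re ≤ lp * f :=
    mul_le_mul_of_nonneg_left hup hlp
  have hlm' : 0 ≤ lm * ((ψ * Λm ρ).trace).re := mul_nonneg hlm hlo
  have key : 1 - ε ≤ lp * f := by
    rw [expand] at hfid; linarith
  have hlpf : (1 - ε) / f ≤ lp := by
    rw [div_le_iff₀ hf0]; linarith
  rw [max_le_iff]
  constructor
  · have : 2 * ((1 - ε) / f) ≤ 2 * lp := by linarith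
    rw [mul_div_assoc]
    linarith
  · linarith
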